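/- Conversely, if v solves M v̇ + Πᵀ(N(v)v + A v − f) = 0 with initial condition J v(0) = 0, then J v(t) = 0 for all t, and setting p = S⁻¹ J M⁻¹ (N(v)v + A v − f) gives a solution of the original differential-algebraic system. -/

import Mathlib

open Matrix

theorem projected_ode_to_dae
    (nv np : ℕ)
    (M A : Matrix (Fin nv) (Fin nv) ℝ) (J : Matrix (Fin np) (Fin nv) ℝ)
    (N : (Fin nv → ℝ) → Matrix (Fin nv) (Fin nv) ℝ)
    (f : ℝ → (Fin nv → ℝ))
    (v : ℝ → (Fin nv → ℝ))
    (hM : M.PosDef) (hJ : J.rank = np)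
    (hNcont : Continuous N) (hfcont : Continuous f)
    (hv : Differentiable ℝ v)
    (hode : ∀ t, M *ᵥ deriv v t
        + (1 - M⁻¹ * Jᵀ * (J * M⁻¹ * Jᵀ)⁻¹ * J)ᵀ *ᵥ ((N (v t)) *ᵥ v t + A *ᵥ v t - f t) = 0)
    (h0 : J *ᵥ v 0 = 0) :
    (∀ t, J *ᵥ v t = 0)
    ∧ (∀ t, M *ᵥ deriv v t + (N (v t)) *ᵥ v t + A *ᵥ v t
        - Jᵀ *ᵥ ((J * M⁻¹ * Jᵀ)⁻¹ *ᵥ (J *ᵥ (M⁻¹ *ᵥ ((N (v t)) *ᵥ v t + A *ᵥ v t - f t))))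
        = f t) := by
  classical
  set g : ℝ → (Fin nv → ℝ) := fun t => (N (v t)) *ᵥ v t + A *ᵥ v t - f t with hg
  set S : Matrix (Fin np) (Fin np) ℝ := J * M⁻¹ * Jᵀ with hS
  have hMu : IsUnit M.det := isUnit_iff_ne_zero.mpr (ne_of_gt hM.det_pos)
  have hMinv : M⁻¹.PosDef := hM.inv
  have hMT : Mᵀ = M := by
    rw [← conjTranspose_eq_transpose_of_trivial]; exact hM.1.eq
  have hMinvT : M⁻¹ᵀ = M⁻¹ := by rw [transpose_nonsing_inv, hMT]
  -- rows of J are linearly independent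
  have hJrows : LinearIndependent ℝ (fun i => J i) := by
    rw [linearIndependent_iff_card_eq_finrank_span]
    have := J.rank_eq_finrank_span_row
    rw [hJ] at this
    rw [Set.finrank, Fintype.card_fin]
    exact this
  have hJT : Function.Injective Jᵀ.mulVec := by
    rw [mulVec_injective_iff]
    exact hJrows
  -- S is positive definite
  have hST : Sᵀ = S := by
    simp only [hS, transpose_mul, transpose_transpose, hMinvT, Matrix.mul_assoc]
  have hSpd : S.PosDef := by
    rw [posDef_iff_dotProduct_mulVec]
    constructor
    · show Sᴴ = S
      rw [conjTranspose_eq_transpose_of_trivial, hST]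
    · intro x hx
      have hx' : Jᵀ *ᵥ x ≠ 0 := by
        intro h
        exact hx (hJT (by simpa using h))
      have h2 := hMinv.dotProduct_mulVec_pos hx'
      have : star x ⬝ᵥ S *ᵥ x = star (Jᵀ *ᵥ x) ⬝ᵥ M⁻¹ *ᵥ (Jᵀ *ᵥ x) := by
        simp only [hS, ← mulVec_mulVec, star_trivial, dotProduct_mulVec, ← mulVec_transpose]
      rw [this]
      exact h2
  have hSu : IsUnit S.det := isUnit_iff_ne_zero.mpr (ne_of_gt hSpd.det_pos)
  have hSinvT : S⁻¹ᵀ = S⁻¹ := by rw [transpose_nonsing_inv, hST]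
  -- the transposed projector
  have hPT : (1 - M⁻¹ * Jᵀ * S⁻¹ * J)ᵀ = 1 - Jᵀ * S⁻¹ * J * M⁻¹ := by
    simp only [transpose_sub, transpose_one, transpose_mul, transpose_transpose,
      hMinvT, hSinvT, Matrix.mul_assoc]
  -- key identity : J * M⁻¹ * Πᵀ = 0
  have hkey : J * M⁻¹ * (1 - M⁻¹ * Jᵀ * S⁻¹ * J)ᵀ = 0 := by
    rw [hPT, Matrix.mul_sub, Matrix.mul_one]
    have : J * M⁻¹ * (Jᵀ * S⁻¹ * J * M⁻¹) = S * S⁻¹ * (J * M⁻¹) := by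
      simp only [hS, Matrix.mul_assoc]
    rw [this, Matrix.mul_nonsing_inv S hSu, Matrix.one_mul, sub_self]
  -- derivative of J v
  have hJd : ∀ t, HasDerivAt (fun t => J *ᵥ v t) (J *ᵥ deriv v t) t := by
    intro t
    have := (J.mulVecLin.toContinuousLinearMap.hasFDerivAt).comp_hasDerivAt t
      (hv t).hasDerivAt
    exact this
  have hJdz : ∀ t, J *ᵥ deriv v t = 0 := by
    intro t
    have h2 : M *ᵥ deriv v t = -((1 - M⁻¹ * Jᵀ * S⁻¹ * J)ᵀ *ᵥ g t) :=
      eq_neg_of_add_eq_zero_left (hode t)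
    have h3 : deriv v t = M⁻¹ *ᵥ (M *ᵥ deriv v t) := by
      rw [mulVec_mulVec, Matrix.nonsing_inv_mul M hMu, one_mulVec]
    rw [h3, h2]
    rw [mulVec_neg, mulVec_neg, mulVec_mulVec, mulVec_mulVec, hkey]
    simp
  -- J v is constant
  have hconst : ∀ t, J *ᵥ v t = 0 := by
    intro t
    have hdiff : Differentiable ℝ (fun t => J *ᵥ v t) := fun t => (hJd t).differentiableAt
    have hder0 : ∀ t, deriv (fun t => J *ᵥ v t) t = 0 := by
      intro t
      rw [(hJd t).deriv]
      exact hJdz t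
    have := is_const_of_deriv_eq_zero hdiff hder0 t 0
    rw [this, h0]
  refine ⟨hconst, fun t => ?_⟩
  -- algebraic part
  have h2 : M *ᵥ deriv v t = (Jᵀ * S⁻¹ * J * M⁻¹) *ᵥ g t - g t := by
    have := eq_neg_of_add_eq_zero_left (hode t)
    rw [this, hPT, sub_mulVec, one_mulVec, neg_sub]
  have hP : Jᵀ *ᵥ (S⁻¹ *ᵥ (J *ᵥ (M⁻¹ *ᵥ g t))) = (Jᵀ * S⁻¹ * J * M⁻¹) *ᵥ g t := by
    simp only [mulVec_mulVec, Matrix.mul_assoc]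
  show M *ᵥ deriv v t + (N (v t)) *ᵥ v t + A *ᵥ v t
      - Jᵀ *ᵥ (S⁻¹ *ᵥ (J *ᵥ (M⁻¹ *ᵥ g t))) = f t
  rw [hP, h2, hg]
  module
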